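/- Let f : ℂ^n → ℂ be a function. Then the following are equivalent: (a) f is continuous and rational; (b) for every x ∈ ℂ^n and every prime ideal I of ℂ[X₁,…,X_n] with Krull dimension of ℂ[X₁,…,X_n]/I equal to 1 and x ∈ Z(I) = {y ∈ ℂ^n : P(y) = 0 for all P ∈ I}, there exists an open neighborhood U_x of x in ℂ^n such that the restriction of f to U_x ∩ Z(I) is continuous and there exist polynomials p, q ∈ ℂ[X₁,…,X_n] with q ∉ I satisfying f(y) = p(y)/q(y) for every y ∈ U_x ∩ Z(I) with q(y) ≠ 0. (Theorem 9.6 in the case of affine n-space.) -/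

import Mathlib

open MvPolynomial


/-- Polynomial maps are continuous. -/
lemma aux_continuous_eval {n : ℕ} (g : MvPolynomial (Fin n) ℂ) :
    Continuous fun y : Fin n → ℂ => eval y g := by
  induction g using MvPolynomial.induction_on with
  | C a => simpa using continuous_const
  | add p q hp hq => simp only [map_add]; exact hp.add hq
  | mul_X p i hp => simp only [map_mul, eval_X]; exact hp.mul (continuous_apply i)

lemma aux_exists_eval_ne {n : ℕ} {g : MvPolynomial (Fin n) ℂ} (hg : g ≠ 0) :
    ∃ y : Fin n → ℂ, eval y g ≠ 0 := by
  by_contra h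
  push_neg at h
  exact hg (MvPolynomial.funext fun x => by simpa using h x)

/-- Evaluating a one-variable specialization. -/
lemma aux_eval_line {n : ℕ} (φ : Fin n → Polynomial ℂ) (g : MvPolynomial (Fin n) ℂ) (t : ℂ) :
    Polynomial.eval t (eval₂ Polynomial.C φ g) = eval (fun j => Polynomial.eval t (φ j)) g := by
  have := MvPolynomial.eval₂_comp_left (Polynomial.evalRingHom t)
    (Polynomial.C : ℂ →+* Polynomial ℂ) φ g
  simp only [Polynomial.coe_evalRingHom] at this
  rw [this]
  have h1 : (Polynomial.evalRingHom t).comp (Polynomial.C : ℂ →+* Polynomial ℂ) =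
      RingHom.id ℂ := by ext c; simp
  rw [h1]
  rfl

/-- Nonvanishing of a nonzero polynomial in a punctured neighborhood. -/
lemma aux_poly_nhdsNE {h : Polynomial ℂ} (hh : h ≠ 0) (t₀ : ℂ) :
    ∀ᶠ t in nhdsWithin t₀ {t₀}ᶜ, Polynomial.eval t h ≠ 0 := by
  have hfin : ({t | h.IsRoot t} \ {t₀}).Finite := (Polynomial.finite_setOf_isRoot hh).diff
  have hcl : IsClosed ({t | h.IsRoot t} \ {t₀}) := hfin.isClosed
  have hmem : ({t | h.IsRoot t} \ {t₀})ᶜ ∈ nhds t₀ :=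
    hcl.isOpen_compl.mem_nhds (by simp)
  filter_upwards [nhdsWithin_le_nhds hmem, self_mem_nhdsWithin] with t ht ht'
  intro h0
  exact ht ⟨h0, ht'⟩

/-- The nonvanishing locus of a nonzero polynomial is dense. -/
lemma aux_dense {n : ℕ} {g : MvPolynomial (Fin n) ℂ} (hg : g ≠ 0) :
    Dense {y : Fin n → ℂ | eval y g ≠ 0} := by
  obtain ⟨y₀, hy₀⟩ := aux_exists_eval_ne hg
  intro z
  rw [Metric.mem_closure_iff]
  intro ε hε
  by_cases hz : eval z g ≠ 0
  · exact ⟨z, hz, by simpa using hε⟩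
  push_neg at hz
  set h : Polynomial ℂ :=
    eval₂ Polynomial.C (fun j => Polynomial.C (z j) + Polynomial.X * Polynomial.C (y₀ j - z j)) g
  have hev : ∀ t : ℂ, Polynomial.eval t h = eval (fun j => z j + t * (y₀ j - z j)) g := by
    intro t
    rw [aux_eval_line]
    have : (fun j => Polynomial.eval t
        (Polynomial.C (z j) + Polynomial.X * Polynomial.C (y₀ j - z j))) =
        fun j => z j + t * (y₀ j - z j) := by funext j; simp
    rw [this]
  have hne : h ≠ 0 := by
    intro h0
    apply hy₀
    have := hev 1
    rw [h0] at this
    simp only [Polynomial.eval_zero] at this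
    rw [show (fun j => z j + 1 * (y₀ j - z j)) = y₀ by funext j; ring] at this
    exact this.symm
  have hEv : ∀ᶠ t in nhdsWithin (0:ℂ) {0}ᶜ, Polynomial.eval t h ≠ 0 := aux_poly_nhdsNE hne 0
  have hsmall : ∀ᶠ t in nhdsWithin (0:ℂ) {0}ᶜ,
      dist (fun j => z j + t * (y₀ j - z j)) z < ε := by
    apply Filter.Eventually.filter_mono nhdsWithin_le_nhds
    have hcont : Continuous fun t : ℂ => dist (fun j => z j + t * (y₀ j - z j)) z := by
      apply Continuous.dist _ continuous_const
      exact continuous_pi fun j => by continuity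
    have : (fun j => z j + (0:ℂ) * (y₀ j - z j)) = z := by funext j; ring_nf
    have h0 : dist (fun j => z j + (0:ℂ) * (y₀ j - z j)) z = 0 := by rw [this]; simp
    have := (hcont.tendsto 0)
    rw [h0] at this
    exact this.eventually_lt_const hε
  obtain ⟨t, ht1, ht2⟩ := (hEv.and hsmall).exists
  exact ⟨fun j => z j + t * (y₀ j - z j), by rw [Set.mem_setOf_eq, ← hev]; exact ht1, by rw [dist_comm]; exact ht2⟩

/-- Two functions continuous on an open set agreeing on a subset that is dense in it
agree on all of it. -/
lemma aux_eqOn_of_dense {α : Type*} [TopologicalSpace α] {F G : α → ℂ} {V S : Set α}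
    (hV : IsOpen V) (hd : ∀ t ∈ V, t ∈ closure S)
    (hF : ContinuousOn F V) (hG : ContinuousOn G V) (h : Set.EqOn F G S) :
    Set.EqOn F G V := by
  intro t ht
  have h1 : ContinuousAt F t := hF.continuousAt (hV.mem_nhds ht)
  have h2 : ContinuousAt G t := hG.continuousAt (hV.mem_nhds ht)
  haveI hne : (nhdsWithin t S).NeBot := mem_closure_iff_nhdsWithin_neBot.mp (hd t ht)
  refine tendsto_nhds_unique (h1.tendsto.mono_left (nhdsWithin_le_nhds : nhdsWithin t S ≤ nhds t)) ?_
  refine (h2.tendsto.mono_left nhdsWithin_le_nhds).congr' ?_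
  filter_upwards [self_mem_nhdsWithin] with s hs
  exact (h hs).symm

/-- An nonempty open subset of `ℂ` is infinite. -/
lemma aux_infinite_open {U : Set ℂ} (hU : IsOpen U) (hne : U.Nonempty) : U.Infinite := by
  intro hfin
  obtain ⟨x, hx⟩ := hne
  have h1 : IsClosed (U \ {x}) := hfin.diff.isClosed
  have h2 : IsOpen ({x} : Set ℂ) := by
    have : ({x} : Set ℂ) = U ∩ (U \ {x})ᶜ := by
      ext y; constructor
      · rintro rfl; exact ⟨hx, fun h => h.2 rfl⟩
      · rintro ⟨hyU, hy⟩
        by_contra hne'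
        exact hy ⟨hyU, hne'⟩
    rw [this]
    exact hU.inter h1.isOpen_compl
  have h3 : ({x} : Set ℂ) ∈ nhdsWithin x {x}ᶜ :=
    nhdsWithin_le_nhds (h2.mem_nhds rfl)
  have h4 : ({x}ᶜ : Set ℂ) ∈ nhdsWithin x {x}ᶜ := self_mem_nhdsWithin
  have h5 : ({x} ∩ {x}ᶜ : Set ℂ) ∈ nhdsWithin x {x}ᶜ := Filter.inter_mem h3 h4
  rw [Set.inter_compl_self] at h5
  exact (Filter.empty_notMem _) h5

/-- Density of nonvanishing locus inside an open subset of `ℂ`. -/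
lemma aux_dense_in_open {q : Polynomial ℂ} (hq : q ≠ 0) {V : Set ℂ} (hV : IsOpen V) :
    ∀ t ∈ V, t ∈ closure (V ∩ {t | Polynomial.eval t q ≠ 0}) := by
  intro t ht
  rw [mem_closure_iff_nhdsWithin_neBot]
  rw [Filter.neBot_iff]
  intro hbot
  have h1 : ∀ᶠ s in nhdsWithin t {t}ᶜ, Polynomial.eval s q ≠ 0 := aux_poly_nhdsNE hq t
  have h2 : V ∈ nhdsWithin t {t}ᶜ := nhdsWithin_le_nhds (hV.mem_nhds ht)
  have h3 : V ∩ {s | Polynomial.eval s q ≠ 0} ∈ nhdsWithin t {t}ᶜ := by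
    filter_upwards [h1, h2] with s hs1 hs2
    exact ⟨hs2, hs1⟩
  have h4 : nhdsWithin t {t}ᶜ ≤ Filter.principal (V ∩ {s | Polynomial.eval s q ≠ 0}) :=
    Filter.le_principal_iff.mpr h3
  have h5 : nhdsWithin t (V ∩ {s | Polynomial.eval s q ≠ 0}) =
      nhdsWithin t (V ∩ {s | Polynomial.eval s q ≠ 0}) := rfl
  -- nhdsWithin t S ⊇ ... show NeBot of nhdsWithin t S from punctured filter
  have hNB : (nhdsWithin t {t}ᶜ).NeBot := by infer_instance
  have : nhdsWithin t {t}ᶜ ≤ nhdsWithin t (V ∩ {s | Polynomial.eval s q ≠ 0}) := by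
    rw [nhdsWithin]
    exact le_inf nhdsWithin_le_nhds h4
  exact hNB.ne (le_bot_iff.mp (hbot ▸ this))

/-- Constant denominator case. -/
lemma aux_one_var_div_zero (q p : Polynomial ℂ) (h0 : q.natDegree = 0) (hq : q ≠ 0)
    {g : ℂ → ℂ} (hg : Continuous g)
    (hid : ∀ t, Polynomial.eval t q * g t = Polynomial.eval t p) :
    ∃ G : Polynomial ℂ, ∀ t, g t = Polynomial.eval t G := by
  have hq0 : q = Polynomial.C (q.coeff 0) := Polynomial.eq_C_of_natDegree_eq_zero h0
  set c := q.coeff 0 with hc0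
  have hc : c ≠ 0 := by intro h0'; apply hq; rw [hq0, h0', map_zero]
  refine ⟨Polynomial.C c⁻¹ * p, fun t => ?_⟩
  have h1 : Polynomial.eval t q = c := by rw [hq0]; simp
  have h2 := hid t
  rw [h1] at h2
  rw [Polynomial.eval_mul, Polynomial.eval_C, ← h2]
  field_simp

/-- Division descent in one variable. -/
lemma aux_one_var_div : ∀ (d : ℕ) (q p : Polynomial ℂ), q.natDegree ≤ d → q ≠ 0 →
    ∀ {g : ℂ → ℂ}, Continuous g → (∀ t, Polynomial.eval t q * g t = Polynomial.eval t p) →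
    ∃ G : Polynomial ℂ, ∀ t, g t = Polynomial.eval t G := by
  intro d
  induction d with
  | zero =>
    intro q p hdeg hq g hg hid
    exact aux_one_var_div_zero q p (Nat.le_zero.mp hdeg) hq hg hid
  | succ d ih =>
    intro q p hdeg hq g hg hid
    by_cases h0 : q.natDegree = 0
    · exact aux_one_var_div_zero q p h0 hq hg hid
    · have hdegpos : 0 < q.degree :=
        Polynomial.natDegree_pos_iff_degree_pos.mp (Nat.pos_of_ne_zero h0)
      obtain ⟨c, hc⟩ := Complex.exists_root hdegpos
      obtain ⟨q', rfl⟩ := Polynomial.dvd_iff_isRoot.mpr hc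
      have hpc : p.IsRoot c := by
        rw [Polynomial.IsRoot, ← hid c]
        simp
      obtain ⟨p', rfl⟩ := Polynomial.dvd_iff_isRoot.mpr hpc
      have hq' : q' ≠ 0 := right_ne_zero_of_mul hq
      have hdeg' : q'.natDegree ≤ d := by
        have hXc : (Polynomial.X - Polynomial.C c : Polynomial ℂ) ≠ 0 :=
          Polynomial.X_sub_C_ne_zero c
        have := Polynomial.natDegree_mul hXc hq'
        rw [Polynomial.natDegree_X_sub_C] at this
        omega
      apply ih q' p' hdeg' hq' hg
      have heq : Set.EqOn (fun t => Polynomial.eval t q' * g t)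
          (fun t => Polynomial.eval t p') {c}ᶜ := by
        intro t ht
        have h1 : t - c ≠ 0 := sub_ne_zero.mpr ht
        have h2 := hid t
        simp only [Polynomial.eval_mul, Polynomial.eval_sub, Polynomial.eval_X,
          Polynomial.eval_C] at h2
        refine mul_left_cancel₀ h1 ?_
        simp only []
        linear_combination h2
      have := Continuous.ext_on (dense_compl_singleton c)
        ((q'.continuous).mul hg) (p'.continuous) heq
      exact fun t => congrFun this t

/-- A locally continuous-rational function on `ℂ` is polynomial. -/
lemma aux_one_var {g : ℂ → ℂ}
    (h : ∀ t₀ : ℂ, ∃ V : Set ℂ, IsOpen V ∧ t₀ ∈ V ∧ ContinuousOn g V ∧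
      ∃ p q : Polynomial ℂ, q ≠ 0 ∧ ∀ t ∈ V, Polynomial.eval t q ≠ 0 →
        g t = Polynomial.eval t p / Polynomial.eval t q) :
    ∃ G : Polynomial ℂ, ∀ t, g t = Polynomial.eval t G := by
  have hg : Continuous g := by
    rw [continuous_iff_continuousAt]
    intro t₀
    obtain ⟨V, hVo, htV, hcont, _⟩ := h t₀
    exact hcont.continuousAt (hVo.mem_nhds htV)
  have h' : ∀ t₀ : ℂ, ∃ V : Set ℂ, IsOpen V ∧ t₀ ∈ V ∧
      ∃ p q : Polynomial ℂ, q ≠ 0 ∧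
        ∀ t ∈ V, Polynomial.eval t q * g t = Polynomial.eval t p := by
    intro t₀
    obtain ⟨V, hVo, htV, hcont, p, q, hq, hpq⟩ := h t₀
    refine ⟨V, hVo, htV, p, q, hq, ?_⟩
    have heq : Set.EqOn (fun t => Polynomial.eval t q * g t) (fun t => Polynomial.eval t p)
        (V ∩ {t | Polynomial.eval t q ≠ 0}) := by
      rintro t ⟨ht1, ht2⟩
      simp only [Set.mem_setOf_eq] at ht2
      simp only []
      rw [hpq t ht1 ht2]
      field_simp
    exact aux_eqOn_of_dense hVo (aux_dense_in_open hq hVo)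
      ((q.continuous).continuousOn.mul hcont) (p.continuous).continuousOn heq
  obtain ⟨V₀, hV₀, h0V, p₀, q₀, hq₀, hloc₀⟩ := h' 0
  set T := {t : ℂ | ∀ᶠ s in nhds t, Polynomial.eval s q₀ * g s = Polynomial.eval s p₀} with hT
  have hTopen : IsOpen T := isOpen_setOf_eventually_nhds
  have hT0 : (0:ℂ) ∈ T := by
    filter_upwards [hV₀.mem_nhds h0V] with s hs using hloc₀ s hs
  have hTclosed : IsClosed T := by
    refine isClosed_of_closure_subset ?_
    intro t ht
    obtain ⟨V, hVo, htV, p, q, hq, hloc⟩ := h' t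
    obtain ⟨t', ht'V, ht'T⟩ := mem_closure_iff.mp ht V hVo htV
    obtain ⟨U, hUsub, hUo, ht'U⟩ := eventually_nhds_iff.mp ht'T
    have hpoly : p₀ * q = p * q₀ := by
      by_contra hne
      have hroots : ∀ s ∈ U ∩ V, (p₀ * q - p * q₀).IsRoot s := by
        rintro s ⟨hsU, hsV⟩
        have e1 := hUsub s hsU
        have e2 := hloc s hsV
        simp only [Polynomial.IsRoot, Polynomial.eval_sub, Polynomial.eval_mul]
        rw [mul_comm (Polynomial.eval s p₀), mul_comm (Polynomial.eval s p)]
        rw [← e1, ← e2]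
        ring
      have hinf : Set.Infinite (U ∩ V) := aux_infinite_open (hUo.inter hVo) ⟨t', ht'U, ht'V⟩
      exact sub_ne_zero_of_ne hne
        (Polynomial.eq_zero_of_infinite_isRoot _ (hinf.mono fun s hs => hroots s hs))
    have hV' : Set.EqOn (fun s => Polynomial.eval s q₀ * g s)
        (fun s => Polynomial.eval s p₀) V := by
      have heq : Set.EqOn (fun s => Polynomial.eval s q₀ * g s)
          (fun s => Polynomial.eval s p₀) (V ∩ {s | Polynomial.eval s q ≠ 0}) := by
        rintro s ⟨hsV, hsq⟩
        simp only [Set.mem_setOf_eq] at hsq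
        have e2 := hloc s hsV
        refine mul_left_cancel₀ hsq ?_
        have e3 : Polynomial.eval s (p₀ * q) = Polynomial.eval s (p * q₀) := by rw [hpoly]
        simp only [Polynomial.eval_mul] at e3
        calc Polynomial.eval s q * (Polynomial.eval s q₀ * g s)
            = Polynomial.eval s q₀ * (Polynomial.eval s q * g s) := by ring
          _ = Polynomial.eval s q₀ * Polynomial.eval s p := by rw [e2]
          _ = Polynomial.eval s q * Polynomial.eval s p₀ := by linear_combination -e3
      exact aux_eqOn_of_dense hVo (aux_dense_in_open hq hVo)
        ((q₀.continuous).continuousOn.mul hg.continuousOn) (p₀.continuous).continuousOn heq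
    filter_upwards [hVo.mem_nhds htV] with s hs using hV' hs
  have hTuniv : T = Set.univ := (IsClopen.eq_univ ⟨hTclosed, hTopen⟩ ⟨0, hT0⟩)
  have hid : ∀ t, Polynomial.eval t q₀ * g t = Polynomial.eval t p₀ := by
    intro t
    have ht : t ∈ T := hTuniv ▸ Set.mem_univ t
    exact ht.self_of_nhds
  exact aux_one_var_div q₀.natDegree q₀ p₀ le_rfl hq₀ hg hid

/-- A continuous rational function on `ℂⁿ` is polynomial. -/
lemma aux_poly_of_cont_rat {n : ℕ} {f : (Fin n → ℂ) → ℂ} (hf : Continuous f)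
    (p q : MvPolynomial (Fin n) ℂ) (hq : q ≠ 0)
    (h : ∀ y, eval y q ≠ 0 → f y = eval y p / eval y q) :
    ∃ P : MvPolynomial (Fin n) ℂ, ∀ y, f y = eval y P := by
  have key : ∀ y, eval y q * f y = eval y p := by
    have heq : Set.EqOn (fun y => eval y q * f y) (fun y => eval y p)
        {y : Fin n → ℂ | eval y q ≠ 0} := by
      intro y hy
      simp only [Set.mem_setOf_eq] at hy
      simp only [h y hy]
      field_simp
    have := Continuous.ext_on (aux_dense hq) ((aux_continuous_eval q).mul hf)
      (aux_continuous_eval p) heq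
    exact fun y => congrFun this y
  clear h
  have main : ∀ q : MvPolynomial (Fin n) ℂ, q ≠ 0 → ∀ p : MvPolynomial (Fin n) ℂ,
      (∀ y, eval y q * f y = eval y p) → ∃ P, ∀ y, f y = eval y P := by
    intro q
    induction q using UniqueFactorizationMonoid.induction_on_prime with
    | h₁ => exact fun h => absurd rfl h
    | h₂ u hu =>
      intro _ p hp
      obtain ⟨v, hv⟩ := hu.exists_right_inv
      refine ⟨v * p, fun y => ?_⟩
      have h1 : eval y u * eval y v = 1 := by
        rw [← map_mul, hv, map_one]
      calc f y = (eval y u * eval y v) * f y := by rw [h1, one_mul]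
        _ = eval y v * (eval y u * f y) := by ring
        _ = eval y v * eval y p := by rw [hp y]
        _ = eval y (v * p) := by rw [map_mul]
    | h₃ a s ha hs ih =>
      intro _ p hp
      have hdvd : s ∣ p := by
        rw [← Ideal.mem_span_singleton]
        have hsp : Ideal.IsPrime (Ideal.span {s}) :=
          (Ideal.span_singleton_prime hs.ne_zero).mpr hs
        have : p ∈ vanishingIdeal ℂ (zeroLocus ℂ (Ideal.span {s})) := by
          rw [mem_vanishingIdeal_iff]
          intro y hy
          change eval y p = 0
          have hsy : eval y s = 0 := hy s (Ideal.mem_span_singleton_self s)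
          have := hp y
          rw [map_mul, hsy, zero_mul, zero_mul] at this
          exact this.symm
        rwa [vanishingIdeal_zeroLocus_eq_radical, hsp.radical] at this
      obtain ⟨p', rfl⟩ := hdvd
      have key2 : ∀ y, eval y a * f y = eval y p' := by
        have heq : Set.EqOn (fun y => eval y a * f y) (fun y => eval y p')
            {y : Fin n → ℂ | eval y s ≠ 0} := by
          intro y hy
          simp only [Set.mem_setOf_eq] at hy
          have := hp y
          rw [map_mul, map_mul] at this
          have : eval y s * (eval y a * f y) = eval y s * eval y p' := by
            rw [← this]; ring
          exact mul_left_cancel₀ hy this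
        have := Continuous.ext_on (aux_dense hs.ne_zero)
          ((aux_continuous_eval a).mul hf) (aux_continuous_eval p') heq
        exact fun y => congrFun this y
      exact ih ha p' key2
  exact main q hq p key

/-- A function that is polynomial on every axis-parallel line is a polynomial. -/
lemma aux_carroll : ∀ (n : ℕ) (f : (Fin n → ℂ) → ℂ),
    (∀ (a : Fin n → ℂ) (i : Fin n), ∃ G : Polynomial ℂ,
      ∀ t, f (Function.update a i t) = Polynomial.eval t G) →
    ∃ P : MvPolynomial (Fin n) ℂ, ∀ y, f y = eval y P := by
  intro n
  induction n with
  | zero =>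
    intro f _
    haveI : Subsingleton (Fin 0 → ℂ) := ⟨fun a b => funext fun i => i.elim0⟩
    refine ⟨C (f fun i => i.elim0), fun y => ?_⟩
    rw [Subsingleton.elim y (fun i => i.elim0)]
    simp
  | succ n ih =>
    intro f hf
    set F : (Fin n → ℂ) → ℂ → ℂ := fun x t => f (Fin.snoc x t) with hF
    have hrow : ∀ x : Fin n → ℂ, ∃ G : Polynomial ℂ, ∀ t, F x t = Polynomial.eval t G := by
      intro x
      obtain ⟨G, hG⟩ := hf (Fin.snoc x 0) (Fin.last n)
      refine ⟨G, fun t => ?_⟩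
      have := hG t
      rwa [Fin.update_snoc_last] at this
    have hcol : ∀ t : ℂ, ∃ Q : MvPolynomial (Fin n) ℂ, ∀ x, F x t = eval x Q := by
      intro t
      apply ih (fun x => F x t)
      intro a i
      obtain ⟨G, hG⟩ := hf (Fin.snoc a t) i.castSucc
      refine ⟨G, fun s => ?_⟩
      have := hG s
      rwa [← Fin.snoc_update] at this
    set A : ℕ → Set (Fin n → ℂ) :=
      fun d => {x | ∃ G : Polynomial ℂ, G.natDegree ≤ d ∧ ∀ t, F x t = Polynomial.eval t G}
      with hA
    have hZar : ∃ d, ∀ g : MvPolynomial (Fin n) ℂ, (∀ x ∈ A d, eval x g = 0) → g = 0 := by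
      by_contra hcon
      push_neg at hcon
      choose g hg hgne using hcon
      have hcover : (⋃ d, {x : Fin n → ℂ | eval x (g d) = 0}) = Set.univ := by
        rw [Set.eq_univ_iff_forall]
        intro x
        obtain ⟨G, hG⟩ := hrow x
        refine Set.mem_iUnion.mpr ⟨G.natDegree, ?_⟩
        exact hg G.natDegree x ⟨G, le_rfl, hG⟩
      have hcl : ∀ d, IsClosed {x : Fin n → ℂ | eval x (g d) = 0} := by
        intro d
        exact isClosed_eq (aux_continuous_eval (g d)) continuous_const
      obtain ⟨d, hd⟩ := nonempty_interior_of_iUnion_of_closed hcl hcover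
      have hdense := aux_dense (hgne d)
      have : {x : Fin n → ℂ | eval x (g d) = 0} = {x : Fin n → ℂ | eval x (g d) ≠ 0}ᶜ := by
        ext x; simp
      rw [this, interior_compl, hdense.closure_eq, Set.compl_univ] at hd
      exact hd.ne_empty rfl
    obtain ⟨d, hdense⟩ := hZar
    set v : Fin (d+1) → ℂ := fun j => (j : ℕ) with hv
    have hinj : Set.InjOn v (Finset.univ : Finset (Fin (d+1))) := by
      intro j _ k _ hjk
      have : ((j : ℕ) : ℂ) = ((k : ℕ) : ℂ) := hjk
      exact Fin.ext (Nat.cast_injective this)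
    choose Q hQ using fun j : Fin (d+1) => hcol (v j)
    have hcard : ((Finset.univ : Finset (Fin (d+1))).card : WithBot ℕ) = (d+1 : ℕ) := by
      simp
    have hkey : ∀ t : ℂ, ∀ x ∈ A d,
        F x t = ∑ j : Fin (d+1), eval x (Q j) *
          Polynomial.eval t (Lagrange.basis Finset.univ v j) := by
      intro t x hx
      obtain ⟨G, hGd, hG⟩ := hx
      have hdeg : G.degree < (Finset.univ : Finset (Fin (d+1))).card := by
        refine lt_of_le_of_lt Polynomial.degree_le_natDegree ?_
        simp only [Finset.card_univ, Fintype.card_fin]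
        exact_mod_cast Nat.lt_succ_of_le hGd
      have hint := Lagrange.eq_interpolate hinj hdeg
      have : Polynomial.eval t G =
          Polynomial.eval t (Lagrange.interpolate Finset.univ v fun j => Polynomial.eval (v j) G) := by
        rw [← hint]
      rw [hG, this, Lagrange.interpolate_apply, Polynomial.eval_finset_sum]
      refine Finset.sum_congr rfl fun j _ => ?_
      rw [Polynomial.eval_mul, Polynomial.eval_C, ← hG, hQ j x]
    have hall : ∀ t x, F x t =
        eval x (∑ j : Fin (d+1), Q j *
          C (Polynomial.eval t (Lagrange.basis Finset.univ v j))) := by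
      intro t x
      obtain ⟨Gt, hGt⟩ := hcol t
      have hvanish : ∀ x' ∈ A d, eval x'
          (Gt - ∑ j : Fin (d+1), Q j * C (Polynomial.eval t (Lagrange.basis Finset.univ v j)))
          = 0 := by
        intro x' hx'
        have h1 := hkey t x' hx'
        rw [hGt x'] at h1
        have h2 : ∑ j : Fin (d+1),
            eval x' (Q j * C (Polynomial.eval t (Lagrange.basis Finset.univ v j))) =
            ∑ j : Fin (d+1), eval x' (Q j) * Polynomial.eval t (Lagrange.basis Finset.univ v j) :=
          Finset.sum_congr rfl fun j _ => by rw [map_mul, eval_C]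
        rw [map_sub, map_sum, h2, sub_eq_zero]
        exact h1
      have := hdense _ hvanish
      rw [sub_eq_zero] at this
      rw [← this, ← hGt x]
    set emb : Polynomial ℂ →+* MvPolynomial (Fin (n+1)) ℂ :=
      Polynomial.eval₂RingHom (MvPolynomial.C) (MvPolynomial.X (Fin.last n)) with hemb
    have hembeval : ∀ (L : Polynomial ℂ) (y : Fin (n+1) → ℂ),
        eval y (emb L) = Polynomial.eval (y (Fin.last n)) L := by
      intro L y
      rw [hemb, Polynomial.coe_eval₂RingHom]
      rw [Polynomial.hom_eval₂]
      have h1 : (eval y).comp (MvPolynomial.C : ℂ →+* MvPolynomial (Fin (n+1)) ℂ) =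
          RingHom.id ℂ := by ext c; simp
      rw [h1]
      rw [MvPolynomial.eval_X, Polynomial.eval]
    refine ⟨∑ j : Fin (d+1), rename Fin.castSucc (Q j) * emb (Lagrange.basis Finset.univ v j),
      fun y => ?_⟩
    have hy : f y = F (Fin.init y) (y (Fin.last n)) := by
      rw [hF]
      simp only []
      rw [Fin.snoc_init_self]
    rw [hy, hall (y (Fin.last n)) (Fin.init y)]
    rw [map_sum, map_sum]
    refine Finset.sum_congr rfl fun j _ => ?_
    rw [map_mul, map_mul, eval_C, eval_rename, hembeval]
    rfl

lemma aux_dim_poly : ringKrullDim (Polynomial ℂ) = 1 := by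
  apply le_antisymm
  · rw [ringKrullDim, Order.krullDim]
    apply iSup_le
    intro l
    have hlen : l.length ≤ 1 := by
      by_contra hlen
      push_neg at hlen
      have h2 : 2 ≤ l.length := hlen
      have i0 : Fin (l.length + 1) := ⟨0, by omega⟩
      have i1 : Fin (l.length + 1) := ⟨1, by omega⟩
      have i2 : Fin (l.length + 1) := ⟨2, by omega⟩
      have hab : l.toFun ⟨0, by omega⟩ < l.toFun ⟨1, by omega⟩ :=
        l.strictMono (by simp [Fin.lt_def])
      have hbc : l.toFun ⟨1, by omega⟩ < l.toFun ⟨2, by omega⟩ :=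
        l.strictMono (by simp [Fin.lt_def])
      set b := l.toFun ⟨1, by omega⟩
      set c := l.toFun ⟨2, by omega⟩
      have hbne : b.asIdeal ≠ ⊥ := by
        intro hb
        have := (PrimeSpectrum.asIdeal_lt_asIdeal _ _).mpr hab
        rw [hb] at this
        exact not_lt_bot this
      haveI := b.2
      haveI := c.2
      have hmax : b.asIdeal.IsMaximal := IsPrime.to_maximal_ideal hbne
      have hlt : b.asIdeal < c.asIdeal := (PrimeSpectrum.asIdeal_lt_asIdeal _ _).mpr hbc
      exact hlt.ne (hmax.eq_of_le c.isPrime.ne_top hlt.le)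
    exact_mod_cast hlen
  · have hX : Prime (Polynomial.X : Polynomial ℂ) := Polynomial.prime_X
    have hbot : ((⊥ : Ideal (Polynomial ℂ))).IsPrime := Ideal.bot_prime
    have hspan : (Ideal.span {(Polynomial.X : Polynomial ℂ)}).IsPrime :=
      (Ideal.span_singleton_prime Polynomial.X_ne_zero).mpr hX
    set P0 : PrimeSpectrum (Polynomial ℂ) := ⟨⊥, hbot⟩
    set P1 : PrimeSpectrum (Polynomial ℂ) := ⟨Ideal.span {Polynomial.X}, hspan⟩
    have hlt : P0 < P1 := by
      rw [← PrimeSpectrum.asIdeal_lt_asIdeal]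
      refine bot_lt_iff_ne_bot.mpr ?_
      simp [P1, Ideal.span_singleton_eq_bot, Polynomial.X_ne_zero]
    set l : LTSeries (PrimeSpectrum (Polynomial ℂ)) :=
      ⟨1, fun i => if i = 0 then P0 else P1, by
        intro i
        have : i = 0 := Fin.eq_zero i
        subst this
        simpa using hlt⟩
    rw [ringKrullDim]
    have h := Order.LTSeries.length_le_krullDim l
    simpa [l] using h

/-- The set of complex points of the subvariety of affine `n`-space defined by an ideal
`I` of the complex polynomial ring. -/
def complexPoints {n : ℕ} (I : Ideal (MvPolynomial (Fin n) ℂ)) : Set (Fin n → ℂ) :=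
  {x | ∀ P ∈ I, eval x P = 0}

/-- **Theorem 9.6** (case of affine `n`-space). A function `f : ℂⁿ → ℂ` is continuous
and rational if and only if it is arc-rational: for every point `x` and every
irreducible complex algebraic curve through `x` (encoded by a prime ideal `I` with
one-dimensional quotient), `f` is continuous rational on the curve near `x`. -/
theorem continuous_rational_iff_arcRational_complex
    (n : ℕ) (f : (Fin n → ℂ) → ℂ) :
    (Continuous f ∧ ∃ p q : MvPolynomial (Fin n) ℂ, q ≠ 0 ∧
      ∀ x : Fin n → ℂ, eval x q ≠ 0 → f x = eval x p / eval x q) ↔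
    (∀ x : Fin n → ℂ, ∀ I : Ideal (MvPolynomial (Fin n) ℂ), I.IsPrime →
      ringKrullDim (MvPolynomial (Fin n) ℂ ⧸ I) = 1 → x ∈ complexPoints I →
      ∃ Ux : Set (Fin n → ℂ), IsOpen Ux ∧ x ∈ Ux ∧
        ContinuousOn f (Ux ∩ complexPoints I) ∧
        ∃ p q : MvPolynomial (Fin n) ℂ, q ∉ I ∧
          ∀ y ∈ Ux ∩ complexPoints I, eval y q ≠ 0 → f y = eval y p / eval y q) := by
  constructor
  · rintro ⟨hc, p, q, hq, hpq⟩ x I hIp hdim hxI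
    obtain ⟨P, hP⟩ := aux_poly_of_cont_rat hc p q hq hpq
    refine ⟨Set.univ, isOpen_univ, Set.mem_univ _, hc.continuousOn, P, 1, ?_, ?_⟩
    · intro h1
      exact hIp.ne_top ((Ideal.eq_top_iff_one I).mpr h1)
    · intro y _ _
      simp [hP y]
  · intro hb
    have hline : ∀ (a : Fin n → ℂ) (i : Fin n), ∃ G : Polynomial ℂ,
        ∀ t, f (Function.update a i t) = Polynomial.eval t G := by
      intro a i
      set φv : Fin n → Polynomial ℂ :=
        fun j => if j = i then Polynomial.X else Polynomial.C (a j) with hφv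
      set φ : MvPolynomial (Fin n) ℂ →+* Polynomial ℂ :=
        eval₂Hom (Polynomial.C : ℂ →+* Polynomial ℂ) φv with hφ
      have hcompat : ∀ (g : MvPolynomial (Fin n) ℂ) (t : ℂ),
          Polynomial.eval t (φ g) = eval (Function.update a i t) g := by
        intro g t
        rw [hφ, coe_eval₂Hom, aux_eval_line]
        have : (fun j => Polynomial.eval t (φv j)) = Function.update a i t := by
          funext j
          by_cases hj : j = i
          · subst hj; simp [hφv]
          · simp [hφv, hj, Function.update_apply]
        rw [this]
      have hsurj : Function.Surjective φ := by
        intro h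
        induction h using Polynomial.induction_on' with
        | add p q hp hq =>
          obtain ⟨gp, hgp⟩ := hp
          obtain ⟨gq, hgq⟩ := hq
          exact ⟨gp + gq, by rw [map_add, hgp, hgq]⟩
        | monomial k c =>
          refine ⟨MvPolynomial.C c * MvPolynomial.X i ^ k, ?_⟩
          rw [map_mul, map_pow]
          have h1 : φ (MvPolynomial.C c) = Polynomial.C c := by simp [hφ]
          have h2 : φ (MvPolynomial.X i) = Polynomial.X := by simp [hφ, hφv]
          rw [h1, h2, Polynomial.C_mul_X_pow_eq_monomial]
      set I := RingHom.ker φ with hI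
      have hprime : I.IsPrime := RingHom.ker_isPrime φ
      have hdim : ringKrullDim (MvPolynomial (Fin n) ℂ ⧸ I) = 1 := by
        rw [ringKrullDim_eq_of_ringEquiv (RingHom.quotientKerEquivOfSurjective hsurj)]
        exact aux_dim_poly
      have hmem : ∀ t : ℂ, Function.update a i t ∈ complexPoints I := by
        intro t P hP
        rw [← hcompat]
        rw [hI, RingHom.mem_ker] at hP
        rw [hP, Polynomial.eval_zero]
      have hγ : Continuous fun t : ℂ => Function.update a i t := by
        apply continuous_pi
        intro j
        by_cases hj : j = i
        · subst hj
          simpa [Function.update_apply] using continuous_id'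
        · simpa [Function.update_apply, hj] using continuous_const
      apply aux_one_var
      intro t₀
      obtain ⟨U, hUo, hxU, hcont, p, q, hqI, hpq⟩ :=
        hb (Function.update a i t₀) I hprime hdim (hmem t₀)
      refine ⟨(fun t : ℂ => Function.update a i t) ⁻¹' U, hUo.preimage hγ, hxU, ?_, φ p, φ q,
        ?_, ?_⟩
      · refine ContinuousOn.comp hcont hγ.continuousOn ?_
        intro t ht
        exact ⟨ht, hmem t⟩
      · rw [hI, RingHom.mem_ker] at hqI
        exact hqI
      · intro t ht hqt
        rw [hcompat, hcompat]
        rw [hcompat] at hqt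
        exact hpq (Function.update a i t) ⟨ht, hmem t⟩ hqt
    obtain ⟨P, hP⟩ := aux_carroll n f hline
    refine ⟨(aux_continuous_eval P).congr fun y => (hP y).symm, P, 1, one_ne_zero, ?_⟩
    intro x _
    simp [hP x]
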